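/- arXiv:2206.12635 — 2 statements merged into one kernel-verified Lean document; each statement's English description precedes it below -/
import Mathlib

section
/- Take r = 1/5 (so x = √24/10, y = 1/10) and let Λ be the subgroup of ℤ² generated by (3, −2) and (1, 2), which has index 8 in ℤ². Then the separation of the induced 8-colouring of the tiles T(i, j) equals 7/5: any two distinct same-coloured tiles are at distance at least 7/5 from each other, and this value is attained. (In particular d(8) ≥ 7/5, improving the previously reported bound 1.37542.) -/
noncomputable section

/-- The Euclidean plane ℝ². -/
abbrev Plane := EuclideanSpace ℝ (Fin 2)

/-- The point (a, b) of the Euclidean plane. -/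
def pt (a b : ℝ) : Plane := !₂[a, b]

/-- The semi-regular hexagon K(r): with y = r/2 and x = √(1 − r²)/2, the closed convex
hull of the six points (0, 1/2), (x, y), (x, −y), (0, −1/2), (−x, −y), (−x, y). -/
def hexK (r : ℝ) : Set Plane :=
  convexHull ℝ
    {pt 0 (1 / 2), pt (Real.sqrt (1 - r ^ 2) / 2) (r / 2),
      pt (Real.sqrt (1 - r ^ 2) / 2) (-(r / 2)), pt 0 (-(1 / 2)),
      pt (-(Real.sqrt (1 - r ^ 2) / 2)) (-(r / 2)),
      pt (-(Real.sqrt (1 - r ^ 2) / 2)) (r / 2)}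

/-- The center c(i, j) = ((2i + j)·x, j·(y + 1/2)) of the tile with index (i, j). -/
def center (r : ℝ) (i j : ℤ) : Plane :=
  pt ((2 * (i : ℝ) + (j : ℝ)) * (Real.sqrt (1 - r ^ 2) / 2)) ((j : ℝ) * (r / 2 + 1 / 2))

/-- The tile T(i, j) = c(i, j) + K(r). -/
def tile (r : ℝ) (i j : ℤ) : Set Plane :=
  (fun p => center r i j + p) '' hexK r

/-- The set of distances realized by points in two distinct same-coloured tiles,
for the colouring of the tiles T(i, j) by the cosets of a subgroup Λ ≤ ℤ²:
tiles T(i, j) and T(i', j') get the same colour iff (i − i', j − j') ∈ Λ.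
The separation of the colouring is the infimum of this set. -/
def sameColourDists (r : ℝ) (Λ : AddSubgroup (ℤ × ℤ)) : Set ℝ :=
  {d : ℝ | ∃ (i j i' j' : ℤ) (p q : Plane),
    (i, j) ≠ (i', j') ∧ (i - i', j - j') ∈ Λ ∧
    p ∈ tile r i j ∧ q ∈ tile r i' j' ∧ d = dist p q}

end

/-! ### Auxiliary material -/

noncomputable section Aux

local notation "X" => Real.sqrt (1 - (1/5 : ℝ) ^ 2) / 2

lemma Xsq : X ^ 2 = 6 / 25 := by
  rw [div_pow, Real.sq_sqrt (by norm_num : (0:ℝ) ≤ 1 - (1/5:ℝ)^2)]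
  norm_num

lemma Xpos : (0:ℝ) < X := by
  have : (0:ℝ) < Real.sqrt (1 - (1/5:ℝ)^2) := Real.sqrt_pos.mpr (by norm_num)
  linarith

/-- Any linear bound valid at the six vertices holds on the hexagon. -/
lemma hex_bound (a b c : ℝ)
    (h1 : b * (1/2) ≤ c) (h2 : a * X + b * (1/10) ≤ c) (h3 : a * X - b * (1/10) ≤ c)
    (h4 : -(b * (1/2)) ≤ c) (h5 : -(a * X) - b * (1/10) ≤ c) (h6 : -(a * X) + b * (1/10) ≤ c)
    {u : Plane} (hu : u ∈ hexK (1/5)) : a * u 0 + b * u 1 ≤ c := by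
  have hlin : IsLinearMap ℝ (fun p : Plane => a * p 0 + b * p 1) := by
    constructor
    · intro p q; simp; ring
    · intro r p; simp [smul_eq_mul]; ring
  have hsub : hexK (1/5) ⊆ {p : Plane | a * p 0 + b * p 1 ≤ c} := by
    apply convexHull_min _ (convex_halfSpace_le hlin c)
    intro p hp
    simp only [Set.mem_insert_iff, Set.mem_singleton_iff] at hp
    rcases hp with rfl | rfl | rfl | rfl | rfl | rfl <;>
      simp only [Set.mem_setOf_eq, pt, PiLp.toLp_apply, Matrix.cons_val_zero, Matrix.cons_val_one,
        Matrix.head_cons] <;> nlinarith [h1, h2, h3, h4, h5, h6]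
  exact hsub hu

lemma hex_c0 {u : Plane} (hu : u ∈ hexK (1/5)) : |u 0| ≤ X := by
  have h1 : (1:ℝ) * u 0 + 0 * u 1 ≤ X :=
    hex_bound 1 0 X (by linarith [Xpos]) (by linarith) (by linarith)
      (by linarith [Xpos]) (by linarith [Xpos]) (by linarith [Xpos]) hu
  have h2 : (-1:ℝ) * u 0 + 0 * u 1 ≤ X :=
    hex_bound (-1) 0 X (by linarith [Xpos]) (by linarith [Xpos]) (by linarith [Xpos])
      (by linarith [Xpos]) (by linarith) (by linarith) hu
  rw [abs_le]; constructor <;> linarith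

lemma hex_c1 {u : Plane} (hu : u ∈ hexK (1/5)) : |u 1| ≤ 1/2 := by
  have h1 : (0:ℝ) * u 0 + 1 * u 1 ≤ 1/2 :=
    hex_bound 0 1 (1/2) (by linarith) (by linarith) (by linarith)
      (by linarith) (by linarith) (by linarith) hu
  have h2 : (0:ℝ) * u 0 + (-1) * u 1 ≤ 1/2 :=
    hex_bound 0 (-1) (1/2) (by linarith) (by linarith) (by linarith)
      (by linarith) (by linarith) (by linarith) hu
  rw [abs_le]; constructor <;> linarith

lemma hex_p {u : Plane} (hu : u ∈ hexK (1/5)) : |2 * X * u 0 + u 1| ≤ 29/50 := by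
  have h1 : (2 * X) * u 0 + 1 * u 1 ≤ 29/50 :=
    hex_bound (2 * X) 1 (29/50) (by norm_num) (by linarith [Xsq]) (by linarith [Xsq])
      (by norm_num) (by linarith [Xsq, Xpos]) (by linarith [Xsq, Xpos]) hu
  have h2 : (-(2 * X)) * u 0 + (-1) * u 1 ≤ 29/50 :=
    hex_bound (-(2 * X)) (-1) (29/50) (by norm_num) (by linarith [Xsq, Xpos])
      (by linarith [Xsq, Xpos]) (by norm_num) (by linarith [Xsq]) (by linarith [Xsq]) hu
  rw [abs_le]; constructor <;> nlinarith [h1, h2]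

lemma hex_m {u : Plane} (hu : u ∈ hexK (1/5)) : |2 * X * u 0 - u 1| ≤ 29/50 := by
  have h1 : (2 * X) * u 0 + (-1) * u 1 ≤ 29/50 :=
    hex_bound (2 * X) (-1) (29/50) (by norm_num) (by linarith [Xsq]) (by linarith [Xsq])
      (by norm_num) (by linarith [Xsq, Xpos]) (by linarith [Xsq, Xpos]) hu
  have h2 : (-(2 * X)) * u 0 + 1 * u 1 ≤ 29/50 :=
    hex_bound (-(2 * X)) 1 (29/50) (by norm_num) (by linarith [Xsq, Xpos])
      (by linarith [Xsq, Xpos]) (by norm_num) (by linarith [Xsq]) (by linarith [Xsq]) hu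
  rw [abs_le]; constructor <;> nlinarith [h1, h2]

/-- The key scalar inequality: the squared distance between points of two
same-coloured tiles is at least (7/5)². -/
lemma key_ineq (x w0 w1 : ℝ) (s t : ℤ) (hX2 : x ^ 2 = 6/25) (hX0 : 0 < x)
    (h0 : |w0| ≤ 2 * x) (h1 : |w1| ≤ 1)
    (hp : |2 * x * w0 + w1| ≤ 29/25) (hm : |2 * x * w0 - w1| ≤ 29/25)
    (hpar : (s + t) % 2 = 0) (hne : ¬(s = 0 ∧ t = 0)) :
    (49:ℝ)/25 ≤ (4 * s * x + w0) ^ 2 + (6 * t / 5 + w1) ^ 2 := by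
  have h0' := abs_le.mp h0
  have h1' := abs_le.mp h1
  have hp' := abs_le.mp hp
  have hm' := abs_le.mp hm
  have hcases : (2 ≤ s ∨ s ≤ -2) ∨ (2 ≤ t ∨ t ≤ -2) ∨
      (s = 1 ∧ t = 1) ∨ (s = 1 ∧ t = -1) ∨ (s = -1 ∧ t = 1) ∨ (s = -1 ∧ t = -1) := by
    omega
  rcases hcases with hs | ht | ⟨rfl, rfl⟩ | ⟨rfl, rfl⟩ | ⟨rfl, rfl⟩ | ⟨rfl, rfl⟩
  · have hs2 : (2:ℝ) ≤ |(s:ℝ)| := by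
      rcases hs with h | h
      · rw [abs_of_nonneg (by exact_mod_cast (by omega : (0:ℤ) ≤ s))]; exact_mod_cast h
      · rw [abs_of_nonpos (by exact_mod_cast (by omega : s ≤ (0:ℤ)))]
        have : (s:ℝ) ≤ -2 := by exact_mod_cast h
        linarith
    have habs : 6 * x ≤ |4 * (s:ℝ) * x + w0| := by
      have h4 : 8 * x ≤ |4 * (s:ℝ) * x| := by
        rw [abs_mul, abs_mul, abs_of_nonneg hX0.le, (by norm_num : |(4:ℝ)| = 4)]
        nlinarith
      calc 6 * x = 8 * x - 2 * x := by ring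
      _ ≤ |4 * (s:ℝ) * x| - |w0| := by linarith
      _ ≤ |4 * (s:ℝ) * x + w0| := by
          have := abs_sub_abs_le_abs_sub (4 * (s:ℝ) * x) (-w0)
          simp only [abs_neg, sub_neg_eq_add] at this
          exact this
    have hsq : (6 * x) ^ 2 ≤ (4 * (s:ℝ) * x + w0) ^ 2 := by
      rw [← sq_abs (4 * (s:ℝ) * x + w0)]
      exact pow_le_pow_left₀ (by positivity) habs 2
    nlinarith [sq_nonneg (6 * (t:ℝ) / 5 + w1)]
  · have ht2 : (2:ℝ) ≤ |(t:ℝ)| := by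
      rcases ht with h | h
      · rw [abs_of_nonneg (by exact_mod_cast (by omega : (0:ℤ) ≤ t))]; exact_mod_cast h
      · rw [abs_of_nonpos (by exact_mod_cast (by omega : t ≤ (0:ℤ)))]
        have : (t:ℝ) ≤ -2 := by exact_mod_cast h
        linarith
    have habs : 7/5 ≤ |6 * (t:ℝ) / 5 + w1| := by
      have h4 : 12/5 ≤ |6 * (t:ℝ) / 5| := by
        rw [abs_div, abs_mul, (by norm_num : |(6:ℝ)| = 6), (by norm_num : |(5:ℝ)| = 5)]
        nlinarith
      calc (7:ℝ)/5 = 12/5 - 1 := by ring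
      _ ≤ |6 * (t:ℝ) / 5| - |w1| := by linarith
      _ ≤ |6 * (t:ℝ) / 5 + w1| := by
          have := abs_sub_abs_le_abs_sub (6 * (t:ℝ) / 5) (-w1)
          simp only [abs_neg, sub_neg_eq_add] at this
          exact this
    have hsq : (7/5:ℝ) ^ 2 ≤ (6 * (t:ℝ) / 5 + w1) ^ 2 := by
      rw [← sq_abs (6 * (t:ℝ) / 5 + w1)]
      exact pow_le_pow_left₀ (by norm_num) habs 2
    nlinarith [sq_nonneg (4 * (s:ℝ) * x + w0)]
  · push_cast
    linarith [sq_nonneg (2 * x + w0), sq_nonneg (1/5 + w1), hp'.1, hX2]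
  · push_cast
    linarith [sq_nonneg (2 * x + w0), sq_nonneg (w1 - 1/5), hm'.1, hX2]
  · push_cast
    linarith [sq_nonneg (w0 - 2 * x), sq_nonneg (1/5 + w1), hm'.2, hX2]
  · push_cast
    linarith [sq_nonneg (w0 - 2 * x), sq_nonneg (w1 - 1/5), hp'.2, hX2]

/-- The homomorphism whose kernel is Λ. -/
def g8 : ℤ × ℤ →+ ZMod 8 where
  toFun p := ((p.2 - 2 * p.1 : ℤ) : ZMod 8)
  map_zero' := by simp
  map_add' := by intro a b; simp only [Prod.fst_add, Prod.snd_add]; push_cast; ring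

lemma lam_eq_ker :
    AddSubgroup.closure ({((3:ℤ), (-2:ℤ)), ((1:ℤ), (2:ℤ))} : Set (ℤ × ℤ)) = g8.ker := by
  apply le_antisymm
  · rw [AddSubgroup.closure_le]
    rintro z hz
    simp only [Set.mem_insert_iff, Set.mem_singleton_iff] at hz
    rcases hz with rfl | rfl <;> simp [g8, AddMonoidHom.mem_ker] <;> decide
  · intro z hz
    rw [AddMonoidHom.mem_ker] at hz
    have hdvd : (8:ℤ) ∣ z.2 - 2 * z.1 := by
      rwa [g8, AddMonoidHom.coe_mk, ZeroHom.coe_mk, ZMod.intCast_zmod_eq_zero_iff_dvd] at hz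
    obtain ⟨k, hk⟩ := hdvd
    have h12 : ((1:ℤ), (2:ℤ)) ∈
        AddSubgroup.closure ({((3:ℤ), (-2:ℤ)), ((1:ℤ), (2:ℤ))} : Set (ℤ × ℤ)) :=
      AddSubgroup.subset_closure (by simp)
    have h32 : ((3:ℤ), (-2:ℤ)) ∈
        AddSubgroup.closure ({((3:ℤ), (-2:ℤ)), ((1:ℤ), (2:ℤ))} : Set (ℤ × ℤ)) :=
      AddSubgroup.subset_closure (by simp)
    have h08 : ((0:ℤ), (-8:ℤ)) ∈
        AddSubgroup.closure ({((3:ℤ), (-2:ℤ)), ((1:ℤ), (2:ℤ))} : Set (ℤ × ℤ)) := by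
      have := AddSubgroup.sub_mem _ h32 (AddSubgroup.zsmul_mem _ h12 3)
      simpa using this
    have hz' : z = z.1 • ((1:ℤ), (2:ℤ)) + (-k) • ((0:ℤ), (-8:ℤ)) := by
      have hzz : z = (z.1, z.2) := rfl
      rw [hzz, Prod.ext_iff]
      constructor <;> simp [smul_eq_mul] <;> omega
    rw [hz']
    exact AddSubgroup.add_mem _ (AddSubgroup.zsmul_mem _ h12 _) (AddSubgroup.zsmul_mem _ h08 _)

lemma idx8 :
    (AddSubgroup.closure ({((3:ℤ), (-2:ℤ)), ((1:ℤ), (2:ℤ))} : Set (ℤ × ℤ))).index = 8 := by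
  rw [lam_eq_ker, AddSubgroup.index_ker]
  have hsurj : Function.Surjective g8 := by
    intro c
    refine ⟨(0, c.val), ?_⟩
    simp [g8, ZMod.natCast_val, ZMod.intCast_cast, ZMod.cast_id]
  rw [AddMonoidHom.range_eq_top_of_surjective g8 hsurj]
  rw [Nat.card_congr AddSubgroup.topEquiv.toEquiv, Nat.card_zmod]

end Aux

/-- with r = 1/5 and Λ = ⟨(3, -2), (1, 2)⟩ ≤ ℤ² of index 8,
the separation of the induced 8-colouring of the tiles T(i, j) equals the stated
value, and this value is attained. -/
theorem statement9 :
    (AddSubgroup.closure {(((3) : ℤ), ((-2) : ℤ)), (((1) : ℤ), ((2) : ℤ))}).index = 8 ∧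
    IsLeast
      (sameColourDists (1 / 5)
        (AddSubgroup.closure {(((3) : ℤ), ((-2) : ℤ)), (((1) : ℤ), ((2) : ℤ))}))
      ((7 : ℝ) / 5) := by
  refine ⟨idx8, ?_, ?_⟩
  · -- the value 7/5 is attained
    refine ⟨0, 0, 2, -4, center (1/5) 0 0 + pt 0 (-(1/2)),
      center (1/5) 2 (-4) + pt 0 (1/2), by decide, ?_, ?_, ?_, ?_⟩
    · rw [AddSubgroup.mem_closure_pair]
      exact ⟨-1, 1, by decide⟩
    · exact ⟨pt 0 (-(1/2)), subset_convexHull ℝ _ (by simp), rfl⟩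
    · exact ⟨pt 0 (1/2), subset_convexHull ℝ _ (by simp), rfl⟩
    · rw [EuclideanSpace.dist_eq, Fin.sum_univ_two]
      simp only [PiLp.add_apply, center, pt, PiLp.toLp_apply, Matrix.cons_val_zero, Matrix.cons_val_one,
        Matrix.head_cons, Real.dist_eq, sq_abs]
      rw [show ((7:ℝ)/5) = Real.sqrt ((7/5)^2) from (Real.sqrt_sq (by norm_num)).symm]
      congr 1
      push_cast
      ring_nf
  · -- 7/5 is a lower bound
    rintro d ⟨i, j, i', j', p, q, hne, hmem, ⟨u, hu, rfl⟩, ⟨v, hv, rfl⟩, rfl⟩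
    rw [AddSubgroup.mem_closure_pair] at hmem
    obtain ⟨m, n, hmn⟩ := hmem
    have hmn1 : i - i' = 3 * m + n := by
      have h := congrArg Prod.fst hmn
      simp only [Prod.fst_add, Prod.smul_fst, smul_eq_mul] at h
      omega
    have hmn2 : j - j' = -2 * m + 2 * n := by
      have h := congrArg Prod.snd hmn
      simp only [Prod.snd_add, Prod.smul_snd, smul_eq_mul] at h
      omega
    have hi : (i:ℝ) - (i':ℝ) = 3 * (m:ℝ) + (n:ℝ) := by exact_mod_cast hmn1
    have hj : (j:ℝ) - (j':ℝ) = -2 * (m:ℝ) + 2 * (n:ℝ) := by exact_mod_cast hmn2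
    -- bounds on u and v
    have hu0 := hex_c0 hu; have hv0 := hex_c0 hv
    have hu1 := hex_c1 hu; have hv1 := hex_c1 hv
    have hup := hex_p hu; have hvp := hex_p hv
    have hum := hex_m hu; have hvm := hex_m hv
    rw [abs_le] at hu0 hv0 hu1 hv1 hup hvp hum hvm
    have hw0 : |u 0 - v 0| ≤ 2 * (Real.sqrt (1 - (1/5:ℝ)^2) / 2) := by
      rw [abs_le]; constructor <;> linarith [hu0.1, hu0.2, hv0.1, hv0.2]
    have hw1 : |u 1 - v 1| ≤ 1 := by
      rw [abs_le]; constructor <;> linarith [hu1.1, hu1.2, hv1.1, hv1.2]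
    have hwp : |2 * (Real.sqrt (1 - (1/5:ℝ)^2) / 2) * (u 0 - v 0) + (u 1 - v 1)| ≤ 29/25 := by
      rw [abs_le]; constructor <;> linarith [hup.1, hup.2, hvp.1, hvp.2]
    have hwm : |2 * (Real.sqrt (1 - (1/5:ℝ)^2) / 2) * (u 0 - v 0) - (u 1 - v 1)| ≤ 29/25 := by
      rw [abs_le]; constructor <;> linarith [hum.1, hum.2, hvm.1, hvm.2]
    have hpar : ((m + n) + (n - m)) % 2 = 0 := by omega
    have hne' : ¬(m + n = 0 ∧ n - m = 0) := by
      rintro ⟨h1, h2⟩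
      exact hne (by rw [Prod.mk.injEq]; omega)
    have hkey := key_ineq (Real.sqrt (1 - (1/5:ℝ)^2) / 2) (u 0 - v 0) (u 1 - v 1)
      (m + n) (n - m) Xsq Xpos hw0 hw1 hwp hwm hpar hne'
    rw [EuclideanSpace.dist_eq, Fin.sum_univ_two]
    rw [show ((7:ℝ)/5) = Real.sqrt ((7/5)^2) from (Real.sqrt_sq (by norm_num)).symm]
    apply Real.sqrt_le_sqrt
    simp only [PiLp.add_apply, center, pt, PiLp.toLp_apply, Matrix.cons_val_zero, Matrix.cons_val_one,
      Matrix.head_cons, Real.dist_eq, sq_abs]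
    have e1 : (2*(i:ℝ)+(j:ℝ)) * (Real.sqrt (1 - ((1:ℝ)/5)^2)/2) + u 0 -
        ((2*(i':ℝ)+(j':ℝ)) * (Real.sqrt (1 - ((1:ℝ)/5)^2)/2) + v 0) =
        4 * ((m + n : ℤ) : ℝ) * (Real.sqrt (1 - ((1:ℝ)/5)^2)/2) + (u 0 - v 0) := by
      push_cast
      linear_combination (Real.sqrt (1 - ((1:ℝ)/5)^2)/2) * (2 * hi + hj)
    have e2 : (j:ℝ) * ((1/5)/2 + 1/2) + u 1 - ((j':ℝ) * ((1/5)/2 + 1/2) + v 1) =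
        6 * ((n - m : ℤ) : ℝ) / 5 + (u 1 - v 1) := by
      push_cast
      linear_combination (3/5 : ℝ) * hj
    rw [e1, e2]
    have : ((7:ℝ)/5)^2 = 49/25 := by norm_num
    rw [this]
    exact hkey
end

section
/- Take r = 1/3 (so x = √2/3, y = 1/6) and let Λ be the subgroup of ℤ² generated by (5, −2) and (1, 4), which has index 22 in ℤ². Then the separation of the induced 22-colouring of the tiles T(i, j) equals 3, and this value is attained. -/
open scoped RealInnerProductSpace

section Aux

lemma intClaim (m n : ℤ) (hd : (22:ℤ) ∣ 4*m - n) (h0 : ¬(m = 0 ∧ n = 0))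
    (h1 : ¬(m = 1 ∧ n = 4)) (h2 : ¬(m = -1 ∧ n = -4)) :
    72 ≤ (2*m+n)*(2*m+n) + 2*(n*n) := by
  by_contra h
  push_neg at h
  have hs1 : -(8:ℤ) ≤ 2*m+n := by nlinarith
  have hs2 : 2*m+n ≤ 8 := by nlinarith
  have hn1 : -(5:ℤ) ≤ n := by nlinarith
  have hn2 : n ≤ 5 := by nlinarith
  have hm1 : -(6:ℤ) ≤ m := by omega
  have hm2 : m ≤ 6 := by omega
  interval_cases m <;> interval_cases n <;> omega

def phi : (ℤ × ℤ) →+ ZMod 22 :=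
  AddMonoidHom.mk' (fun p => ((4 * p.1 - p.2 : ℤ) : ZMod 22)) (by
    intro a b
    simp only [Prod.fst_add, Prod.snd_add]
    push_cast
    ring)

lemma closure_eq : AddSubgroup.closure {(((5) : ℤ), ((-2) : ℤ)), (((1) : ℤ), ((4) : ℤ))} = phi.ker := by
  apply le_antisymm
  · rw [AddSubgroup.closure_le]
    rintro x hx
    rcases hx with rfl | rfl <;> simp [phi, AddMonoidHom.mem_ker] <;> decide
  · rintro ⟨m, n⟩ hmn
    have h22 : (22:ℤ) ∣ 4*m - n := by
      have h0 : ((4*m - n : ℤ) : ZMod 22) = 0 := AddMonoidHom.mem_ker.mp hmn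
      exact (ZMod.intCast_zmod_eq_zero_iff_dvd _ 22).mp h0
    obtain ⟨k, hk⟩ := h22
    have : (m, n) = k • ((5:ℤ), (-2:ℤ)) + (m - 5*k) • ((1:ℤ), (4:ℤ)) := by
      simp only [Prod.smul_def, smul_eq_mul, Prod.mk_add_mk, Prod.mk.injEq]
      constructor <;> omega
    rw [this]
    exact AddSubgroup.add_mem _
      (AddSubgroup.zsmul_mem _ (AddSubgroup.subset_closure (by simp)) k)
      (AddSubgroup.zsmul_mem _ (AddSubgroup.subset_closure (by simp)) _)

lemma memLambda (m n : ℤ) :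
    (m, n) ∈ AddSubgroup.closure {(((5) : ℤ), ((-2) : ℤ)), (((1) : ℤ), ((4) : ℤ))} ↔ (22:ℤ) ∣ 4*m - n := by
  rw [closure_eq, AddMonoidHom.mem_ker]
  exact ZMod.intCast_zmod_eq_zero_iff_dvd (4*m - n) 22

lemma index_eq : (AddSubgroup.closure {(((5) : ℤ), ((-2) : ℤ)), (((1) : ℤ), ((4) : ℤ))}).index = 22 := by
  rw [closure_eq, AddSubgroup.index_ker]
  have hsurj : Function.Surjective phi := by
    intro c
    refine ⟨(0, -(c.val : ℤ)), ?_⟩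
    show ((4 * 0 - -(c.val : ℤ) : ℤ) : ZMod 22) = c
    push_cast
    simp [ZMod.natCast_val, ZMod.cast_id]
  rw [AddMonoidHom.range_eq_top.mpr hsurj,
    show Nat.card (⊤ : AddSubgroup (ZMod 22)) = Nat.card (ZMod 22) from
      Nat.card_congr AddSubgroup.topEquiv.toEquiv, Nat.card_zmod]

noncomputable section
lemma pt_congr {a b c d : ℝ} (h1 : a = c) (h2 : b = d) : pt a b = pt c d := by rw [h1, h2]

lemma pt_sub (a b c d : ℝ) : pt a b - pt c d = pt (a - c) (b - d) := by
  ext i; fin_cases i <;> simp [pt]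

lemma pt_add (a b c d : ℝ) : pt a b + pt c d = pt (a + c) (b + d) := by
  ext i; fin_cases i <;> simp [pt]

lemma norm_pt (a b : ℝ) : ‖pt a b‖ = Real.sqrt (a ^ 2 + b ^ 2) := by
  simp [pt, EuclideanSpace.norm_eq, Fin.sum_univ_two, Real.norm_eq_abs, sq_abs]

lemma inner_pt (a b c d : ℝ) : ⟪pt a b, pt c d⟫ = a * c + b * d := by
  simp [pt, PiLp.inner_apply, Fin.sum_univ_two]
  ring

lemma sq_sqrt2 : Real.sqrt 2 ^ 2 = 2 := Real.sq_sqrt (by norm_num)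
lemma sqrt2_pos : 0 < Real.sqrt 2 := Real.sqrt_pos.mpr (by norm_num)

lemma sqrtX : Real.sqrt (1 - (1/3:ℝ) ^ 2) / 2 = Real.sqrt 2 / 3 := by
  have h : (1 - (1/3:ℝ) ^ 2) = (2 * Real.sqrt 2 / 3) ^ 2 := by
    nlinarith [sq_sqrt2]
  rw [h, Real.sqrt_sq (by positivity)]
  ring

lemma center_apply (i j : ℤ) :
    center (1/3) i j = pt ((2 * (i:ℝ) + (j:ℝ)) * (Real.sqrt 2 / 3)) ((j:ℝ) * (2/3)) := by
  unfold center
  exact pt_congr (by rw [sqrtX]) (by norm_num)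

lemma hexK_third : hexK (1/3) = convexHull ℝ
    {pt 0 (1/2), pt (Real.sqrt 2 / 3) (1/6), pt (Real.sqrt 2 / 3) (-(1/6)),
      pt 0 (-(1/2)), pt (-(Real.sqrt 2 / 3)) (-(1/6)), pt (-(Real.sqrt 2 / 3)) (1/6)} := by
  unfold hexK
  rw [sqrtX]
  norm_num

/-- The unit functional direction. -/
def uvec : Plane := pt (4 * Real.sqrt 2 / 9) (7/9)

lemma norm_uvec : ‖uvec‖ = 1 := by
  rw [uvec, norm_pt, show (4 * Real.sqrt 2 / 9) ^ 2 + (7/9:ℝ) ^ 2 = 1 by nlinarith [sq_sqrt2]]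
  exact Real.sqrt_one

lemma inner_uvec (a b : ℝ) : ⟪uvec, pt a b⟫ = 4 * Real.sqrt 2 / 9 * a + 7/9 * b := by
  rw [uvec, inner_pt]

lemma isLinearMap_inner : IsLinearMap ℝ (fun w : Plane => ⟪uvec, w⟫) :=
  ⟨fun x y => inner_add_right uvec x y, fun c x => real_inner_smul_right uvec x c⟩

lemma hex_norm_le {w : Plane} (hw : w ∈ hexK (1/3)) : ‖w‖ ≤ 1/2 := by
  rw [hexK_third] at hw
  have : hexK (1/3) ⊆ Metric.closedBall (0:Plane) (1/2) := by
    rw [hexK_third]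
    apply convexHull_min _ (convex_closedBall _ _)
    intro v hv
    simp only [Set.mem_insert_iff, Set.mem_singleton_iff] at hv
    have hkey : ∀ a b : ℝ, a ^ 2 + b ^ 2 = 1/4 → pt a b ∈ Metric.closedBall (0:Plane) (1/2) := by
      intro a b hab
      rw [Metric.mem_closedBall, dist_zero_right, norm_pt, hab,
        show (1/4:ℝ) = (1/2)^2 by norm_num, Real.sqrt_sq (by norm_num)]
    rcases hv with rfl|rfl|rfl|rfl|rfl|rfl <;>
      exact hkey _ _ (by nlinarith [sq_sqrt2])
  simpa [Metric.mem_closedBall, dist_zero_right] using this (by rwa [hexK_third])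

lemma hex_inner_le {w : Plane} (hw : w ∈ hexK (1/3)) : ⟪uvec, w⟫ ≤ 23/54 := by
  rw [hexK_third] at hw
  have hsub : convexHull ℝ
      {pt 0 (1/2), pt (Real.sqrt 2 / 3) (1/6), pt (Real.sqrt 2 / 3) (-(1/6)),
        pt 0 (-(1/2)), pt (-(Real.sqrt 2 / 3)) (-(1/6)), pt (-(Real.sqrt 2 / 3)) (1/6)}
      ⊆ {v : Plane | ⟪uvec, v⟫ ≤ 23/54} := by
    apply convexHull_min _ (convex_halfSpace_le isLinearMap_inner _)
    intro v hv
    simp only [Set.mem_insert_iff, Set.mem_singleton_iff] at hv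
    rcases hv with rfl|rfl|rfl|rfl|rfl|rfl <;>
      · show ⟪uvec, _⟫ ≤ (23/54:ℝ)
        rw [inner_uvec]
        nlinarith [sq_sqrt2, sqrt2_pos]
  exact hsub hw

lemma hex_inner_ge {w : Plane} (hw : w ∈ hexK (1/3)) : -(23/54) ≤ ⟪uvec, w⟫ := by
  rw [hexK_third] at hw
  have hsub : convexHull ℝ
      {pt 0 (1/2), pt (Real.sqrt 2 / 3) (1/6), pt (Real.sqrt 2 / 3) (-(1/6)),
        pt 0 (-(1/2)), pt (-(Real.sqrt 2 / 3)) (-(1/6)), pt (-(Real.sqrt 2 / 3)) (1/6)}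
      ⊆ {v : Plane | -(23/54) ≤ ⟪uvec, v⟫} := by
    apply convexHull_min _ (convex_halfSpace_ge isLinearMap_inner _)
    intro v hv
    simp only [Set.mem_insert_iff, Set.mem_singleton_iff] at hv
    rcases hv with rfl|rfl|rfl|rfl|rfl|rfl <;>
      · show -(23/54:ℝ) ≤ ⟪uvec, _⟫
        rw [inner_uvec]
        nlinarith [sq_sqrt2, sqrt2_pos]
  exact hsub hw

lemma caseA {i j i' j' : ℤ} (hi : i - i' = 1) (hj : j - j' = 4) {p q : Plane}
    (hp : p ∈ tile (1/3) i j) (hq : q ∈ tile (1/3) i' j') : 3 ≤ dist p q := by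
  obtain ⟨p₀, hp₀, rfl⟩ := hp
  obtain ⟨q₀, hq₀, rfl⟩ := hq
  have hi' : (i:ℝ) - i' = 1 := by exact_mod_cast congrArg (Int.cast : ℤ → ℝ) hi
  have hj' : (j:ℝ) - j' = 4 := by exact_mod_cast congrArg (Int.cast : ℤ → ℝ) hj
  have hc : center (1/3) i j - center (1/3) i' j' = pt (2 * Real.sqrt 2) (8/3) := by
    rw [center_apply, center_apply, pt_sub]
    exact pt_congr (by linear_combination (Real.sqrt 2 / 3) * (2 * hi' + hj')) (by linarith)
  have hsplit : (center (1/3) i j + p₀) - (center (1/3) i' j' + q₀)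
      = (center (1/3) i j - center (1/3) i' j') + (p₀ - q₀) := by abel
  have hinner : (3:ℝ) ≤ ⟪uvec, (center (1/3) i j + p₀) - (center (1/3) i' j' + q₀)⟫ := by
    rw [hsplit, hc, inner_add_right, inner_sub_right, inner_uvec]
    have h1 := hex_inner_ge hp₀
    have h2 := hex_inner_le hq₀
    nlinarith [sq_sqrt2]
  have hcs := real_inner_le_norm uvec ((center (1/3) i j + p₀) - (center (1/3) i' j' + q₀))
  rw [norm_uvec, one_mul] at hcs
  rw [dist_eq_norm]
  linarith

lemma caseB {i j i' j' : ℤ}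
    (h : (72:ℤ) ≤ (2*(i-i')+(j-j'))*(2*(i-i')+(j-j')) + 2*((j-j')*(j-j'))) {p q : Plane}
    (hp : p ∈ tile (1/3) i j) (hq : q ∈ tile (1/3) i' j') : 3 ≤ dist p q := by
  obtain ⟨p₀, hp₀, rfl⟩ := hp
  obtain ⟨q₀, hq₀, rfl⟩ := hq
  set m : ℝ := (i:ℝ) - i' with hm
  set n : ℝ := (j:ℝ) - j' with hn
  clear_value m n
  have h' : (72:ℝ) ≤ (2*m+n)*(2*m+n) + 2*(n*n) := by
    rw [hm, hn]; exact_mod_cast h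
  have hc : center (1/3) i j - center (1/3) i' j' = pt ((2*m+n) * (Real.sqrt 2 / 3)) (n * (2/3)) := by
    rw [center_apply, center_apply, pt_sub]
    exact pt_congr (by rw [hm, hn]; ring) (by rw [hn]; ring)
  have hcnorm : (4:ℝ) ≤ ‖center (1/3) i j - center (1/3) i' j'‖ := by
    rw [hc, norm_pt]
    apply Real.le_sqrt_of_sq_le
    have expand : ((2*m+n) * (Real.sqrt 2 / 3)) ^ 2 + (n * (2/3)) ^ 2
        = ((2*m+n)*(2*m+n) + 2*(n*n)) * (2/9) := by
      linear_combination ((2*m+n)^2 / 9) * sq_sqrt2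
    rw [expand, show ((4:ℝ))^2 = 16 by norm_num]
    linarith
  have hsplit : (center (1/3) i j + p₀) - (center (1/3) i' j' + q₀)
      = (center (1/3) i j - center (1/3) i' j') + (p₀ - q₀) := by abel
  have hlow : ‖center (1/3) i j - center (1/3) i' j'‖
      ≤ ‖(center (1/3) i j - center (1/3) i' j') + (p₀ - q₀)‖ + ‖p₀ - q₀‖ := by
    calc ‖center (1/3) i j - center (1/3) i' j'‖
        = ‖((center (1/3) i j - center (1/3) i' j') + (p₀ - q₀)) - (p₀ - q₀)‖ := by
          rw [add_sub_cancel_right]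
      _ ≤ _ := norm_sub_le _ _
  have hpq : ‖p₀ - q₀‖ ≤ 1 := by
    have := norm_sub_le p₀ q₀
    have h1 := hex_norm_le hp₀
    have h2 := hex_norm_le hq₀
    linarith
  rw [dist_eq_norm, hsplit]
  linarith


end
end Aux

/-- with r = 1/3 and Λ = ⟨(5, -2), (1, 4)⟩ ≤ ℤ² of index 22,
the separation of the induced 22-colouring of the tiles T(i, j) equals the stated
value, and this value is attained. -/
theorem statement13 :
    (AddSubgroup.closure {(((5) : ℤ), ((-2) : ℤ)), (((1) : ℤ), ((4) : ℤ))}).index = 22 ∧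
    IsLeast
      (sameColourDists (1 / 3)
        (AddSubgroup.closure {(((5) : ℤ), ((-2) : ℤ)), (((1) : ℤ), ((4) : ℤ))}))
      ((3 : ℝ)) := by
  constructor
  · exact index_eq
  constructor
  · -- the value 3 is attained
    refine ⟨1, 4, 0, 0, center (1/3) 1 4 + pt (-(Real.sqrt 2/3)) (-(1/6)),
      pt (Real.sqrt 2/3) (1/6), by decide, (memLambda _ _).mpr (by norm_num), ?_, ?_, ?_⟩
    · exact ⟨pt (-(Real.sqrt 2/3)) (-(1/6)), by
        rw [hexK_third]
        exact subset_convexHull ℝ _ (by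
          simp only [Set.mem_insert_iff, Set.mem_singleton_iff]; tauto), rfl⟩
    · refine ⟨pt (Real.sqrt 2/3) (1/6), by
        rw [hexK_third]
        exact subset_convexHull ℝ _ (by
          simp only [Set.mem_insert_iff, Set.mem_singleton_iff]; tauto), ?_⟩
      show center (1/3) 0 0 + pt (Real.sqrt 2/3) (1/6) = pt (Real.sqrt 2/3) (1/6)
      rw [center_apply, pt_add]
      exact pt_congr (by push_cast; ring) (by push_cast; ring)
    · rw [dist_eq_norm]
      rw [center_apply, pt_add, pt_sub, norm_pt]
      have hval : ((2 * ((1:ℤ):ℝ) + ((4:ℤ):ℝ)) * (Real.sqrt 2 / 3) + -(Real.sqrt 2/3)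
            - Real.sqrt 2/3) ^ 2 + (((4:ℤ):ℝ) * (2/3) + -(1/6) - 1/6) ^ 2 = 9 := by
        push_cast
        linear_combination (16/9) * sq_sqrt2
      rw [hval, show (9:ℝ) = 3^2 by norm_num, Real.sqrt_sq (by norm_num)]
  · -- 3 is a lower bound
    rintro d ⟨i, j, i', j', p, q, hne, hmem, hp, hq, rfl⟩
    have h22 : (22:ℤ) ∣ 4*(i - i') - (j - j') := (memLambda _ _).mp hmem
    by_cases hA : i - i' = 1 ∧ j - j' = 4
    · exact caseA hA.1 hA.2 hp hq
    by_cases hB : i - i' = -1 ∧ j - j' = -4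
    · rw [dist_comm]
      exact caseA (by omega : i' - i = 1) (by omega : j' - j = 4) hq hp
    have h0 : ¬(i - i' = 0 ∧ j - j' = 0) := by
      rintro ⟨h1, h2⟩
      exact hne (Prod.ext_iff.mpr ⟨by omega, by omega⟩)
    exact caseB (intClaim _ _ h22 h0 hA hB) hp hq
end
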